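/- arXiv:1109.5132 — 2 statements merged into one kernel-verified Lean document; each statement's English description precedes it below -/
import Mathlib

section
/- Define m′(δ) = ∫₀^∞ ln(y(t)) · δ e^{−δ t} dt. Then m′(δ) ≥ ln c₂ + ν₁/δ for every δ > 0; in particular m′(δ) > 0 whenever 0 < δ < −ν₁/ln c₂. -/
open MeasureTheory

/-- m′(δ) ≥ ln c₂ + ν₁/δ, and m′(δ) > 0 whenever 0 < δ < −ν₁/ln c₂. -/
theorem stmt_11 (ν₁ ν₂ c₁ c₂ : ℝ) (hν₂ : ν₂ < 0) (hν₁ : 0 < ν₁)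
    (hc₁ : c₁ ∈ Set.Ioo (0 : ℝ) 1) (hc₂ : c₂ = 1 - c₁)
    (y : ℝ → ℝ)
    (hy : y = fun t => c₁ * Real.exp (ν₂ * t) + c₂ * Real.exp (ν₁ * t))
    (δ : ℝ) (hδ : 0 < δ)
    (hint : IntegrableOn (fun t => Real.log (y t) * (δ * Real.exp (-δ * t)))
      (Set.Ioi (0 : ℝ)) volume) :
    Real.log c₂ + ν₁ / δ ≤ ∫ t in Set.Ioi (0 : ℝ),
        Real.log (y t) * (δ * Real.exp (-δ * t)) ∧
    (δ < -ν₁ / Real.log c₂ →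
      0 < ∫ t in Set.Ioi (0 : ℝ), Real.log (y t) * (δ * Real.exp (-δ * t))) := by
  obtain ⟨hc₁0, hc₁1⟩ := hc₁
  have hc₂0 : 0 < c₂ := by rw [hc₂]; linarith
  have hc₂1 : c₂ < 1 := by rw [hc₂]; linarith
  set g : ℝ → ℝ := fun t => (Real.log c₂ + ν₁ * t) * (δ * Real.exp (-δ * t)) with hg
  -- integrability of g
  have h1 : IntegrableOn (fun t => Real.exp (-δ * t)) (Set.Ioi 0) volume :=
    exp_neg_integrableOn_Ioi 0 hδ
  have h2 : IntegrableOn (fun t : ℝ => t * Real.exp (-δ * t)) (Set.Ioi 0) volume := by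
    have h := integrableOn_rpow_mul_exp_neg_mul_rpow (s := 1) (p := 1)
      (by norm_num) (by norm_num) hδ
    refine h.congr_fun (fun x hx => ?_) measurableSet_Ioi
    simp [Real.rpow_one]
  have hgint : IntegrableOn g (Set.Ioi 0) volume := by
    have h := (h1.const_mul (Real.log c₂ * δ)).add (h2.const_mul (ν₁ * δ))
    refine h.congr (Filter.Eventually.of_forall fun x => ?_)
    simp only [hg, Pi.add_apply]; ring
  -- compute ∫ g
  set F : ℝ → ℝ := fun t => -(Real.log c₂ + ν₁ * t + ν₁ / δ) * Real.exp (-δ * t) with hF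
  have hderiv : ∀ x ∈ Set.Ioi (0 : ℝ), HasDerivAt F (g x) x := by
    intro x _
    have hexp : HasDerivAt (fun t : ℝ => Real.exp (-δ * t)) (-δ * Real.exp (-δ * x)) x := by
      have h := ((hasDerivAt_id x).const_mul (-δ)).exp
      simpa [mul_comm] using h
    have hlin : HasDerivAt (fun t : ℝ => -(Real.log c₂ + ν₁ * t + ν₁ / δ)) (-ν₁) x := by
      have h := (((hasDerivAt_id x).const_mul ν₁).const_add (Real.log c₂)).add_const (ν₁ / δ)
      exact h.neg.congr_deriv (by ring)
    have h := hlin.mul hexp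
    refine h.congr_deriv ?_
    simp only [hg]
    field_simp
    ring
  have hA : Filter.Tendsto (fun t : ℝ => Real.exp (-δ * t)) Filter.atTop (nhds 0) := by
    have h := tendsto_rpow_mul_exp_neg_mul_atTop_nhds_zero 0 δ hδ
    simpa using h
  have hB : Filter.Tendsto (fun t : ℝ => t * Real.exp (-δ * t)) Filter.atTop (nhds 0) := by
    have h := tendsto_rpow_mul_exp_neg_mul_atTop_nhds_zero 1 δ hδ
    refine h.congr (fun x => ?_)
    simp [Real.rpow_one]
  have htend : Filter.Tendsto F Filter.atTop (nhds 0) := by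
    have h := (hA.const_mul (-(Real.log c₂ + ν₁ / δ))).add (hB.const_mul (-ν₁))
    simp only [mul_zero, add_zero] at h
    refine h.congr (fun x => ?_)
    simp only [hF]; ring
  have hcont : ContinuousWithinAt F (Set.Ici 0) 0 := by
    have : Continuous F := by
      simp only [hF]; fun_prop
    exact this.continuousWithinAt
  have hval : ∫ t in Set.Ioi (0 : ℝ), g t = Real.log c₂ + ν₁ / δ := by
    rw [MeasureTheory.integral_Ioi_of_hasDerivAt_of_tendsto hcont hderiv hgint htend]
    simp [hF]
  -- pointwise bound
  have hmono : ∀ t ∈ Set.Ioi (0 : ℝ), g t ≤ Real.log (y t) * (δ * Real.exp (-δ * t)) := by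
    intro t _
    have hyle : c₂ * Real.exp (ν₁ * t) ≤ y t := by
      simp only [hy]
      have : 0 < c₁ * Real.exp (ν₂ * t) := by positivity
      linarith
    have hlog : Real.log c₂ + ν₁ * t ≤ Real.log (y t) := by
      have h := Real.log_le_log (by positivity) hyle
      rwa [Real.log_mul (ne_of_gt hc₂0) (Real.exp_ne_zero _), Real.log_exp] at h
    exact mul_le_mul_of_nonneg_right hlog (by positivity)
  have hle : Real.log c₂ + ν₁ / δ ≤ ∫ t in Set.Ioi (0 : ℝ),
      Real.log (y t) * (δ * Real.exp (-δ * t)) := by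
    rw [← hval]
    exact setIntegral_mono_on hgint hint measurableSet_Ioi hmono
  refine ⟨hle, fun hsmall => ?_⟩
  have hlogneg : Real.log c₂ < 0 := Real.log_neg hc₂0 hc₂1
  have h1' : -ν₁ < δ * Real.log c₂ := (lt_div_iff_of_neg hlogneg).mp hsmall
  have h2' : -Real.log c₂ < ν₁ / δ := by
    rw [lt_div_iff₀ hδ]; nlinarith
  linarith
end

section
/- Let m′(δ) = ∫₀^∞ ln(y(u/δ)) e^{−u} du. Then m′(δ) ≤ y′(0)/δ + (1/δ²)·2K/(1−ν₁/δ)³ for δ > ν₁, where K = 2·max(c₁ν₂², c₂ν₁²). Consequently, since y′(0) < 0, there exists δ₂ > 0 such that m′(δ) < 0 for all δ > δ₂. -/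
open MeasureTheory

open Filter in
lemma aux_int (c : ℝ) (hc : c < 1) :
    IntegrableOn (fun u => Real.exp ((c - 1) * u)) (Set.Ioi (0:ℝ)) := by
  have h := exp_neg_integrableOn_Ioi (0:ℝ) (show (0:ℝ) < 1 - c by linarith)
  simpa [neg_sub] using h

open Filter in
lemma aux_val (c : ℝ) (hc : c < 1) :
    ∫ u in Set.Ioi (0:ℝ), Real.exp ((c - 1) * u) = 1 / (1 - c) := by
  have hne : c - 1 ≠ 0 := by intro h; linarith [sub_eq_zero.mp h]
  have hd : ∀ x ∈ Set.Ioi (0:ℝ),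
      HasDerivAt (fun u => Real.exp ((c - 1) * u) / (c - 1)) (Real.exp ((c - 1) * x)) x := by
    intro x _
    have h1 : HasDerivAt (fun u : ℝ => (c - 1) * u) (c - 1) x := by
      simpa using (hasDerivAt_id x).const_mul (c - 1)
    have h2 : HasDerivAt (fun u => Real.exp ((c - 1) * u))
        (Real.exp ((c - 1) * x) * (c - 1)) x := (Real.hasDerivAt_exp _).comp x h1
    have h3 := h2.div_const (c - 1)
    simpa [mul_div_assoc, div_self hne] using h3
  have htend : Tendsto (fun u => Real.exp ((c - 1) * u) / (c - 1)) atTop (nhds 0) := by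
    have h0 : Tendsto (fun u : ℝ => (1 - c) * u) atTop atTop :=
      Tendsto.const_mul_atTop (show (0:ℝ) < 1 - c by linarith) tendsto_id
    have h1 : Tendsto (fun u : ℝ => (c - 1) * u) atTop atBot := by
      have heq : (fun u : ℝ => (c - 1) * u) = fun u => -((1 - c) * u) := by funext u; ring
      rw [heq]
      exact tendsto_neg_atTop_atBot.comp h0
    have h2 : Tendsto (fun u => Real.exp ((c - 1) * u)) atTop (nhds 0) :=
      Real.tendsto_exp_atBot.comp h1
    simpa using h2.div_const (c - 1)
  have hcont : ContinuousWithinAt (fun u => Real.exp ((c - 1) * u) / (c - 1)) (Set.Ici 0) 0 := by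
    apply Continuous.continuousWithinAt; fun_prop
  rw [integral_Ioi_of_hasDerivAt_of_tendsto hcont hd (aux_int c hc) htend]
  rw [mul_zero, Real.exp_zero]
  rw [zero_sub, show (1:ℝ) - c = -(c - 1) by ring, div_neg]

set_option maxHeartbeats 1600000 in
/-- m′(δ) = ∫₀^∞ ln(y(u/δ)) e^{−u} du satisfies m′(δ) ≤ y′(0)/δ + (1/δ²)·2K/(1−ν₁/δ)³
for δ > ν₁; consequently, since y′(0) = −b < 0, m′(δ) < 0 for all large δ. -/
theorem stmt_15 (a b lam : ℝ) (ha : 0 < a) (hb : 0 < b) (hlam : 0 < lam)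
    (ν₁ ν₂ c₁ c₂ : ℝ) (hν₁pos : 0 < ν₁) (hν₂neg : ν₂ < 0)
    (hroot₁ : ν₁ ^ 2 + (a + b - lam) * ν₁ - b * lam = 0)
    (hroot₂ : ν₂ ^ 2 + (a + b - lam) * ν₂ - b * lam = 0)
    (hc₁ : c₁ ∈ Set.Ioo (0 : ℝ) 1) (hc₂ : c₂ = 1 - c₁)
    (hderiv0 : c₁ * ν₂ + c₂ * ν₁ = -b)
    (y : ℝ → ℝ)
    (hy : y = fun t => c₁ * Real.exp (ν₂ * t) + c₂ * Real.exp (ν₁ * t))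
    (K : ℝ) (hK : K = 2 * max (c₁ * ν₂ ^ 2) (c₂ * ν₁ ^ 2))
    (m' : ℝ → ℝ)
    (hm' : m' = fun δ => ∫ u in Set.Ioi (0 : ℝ), Real.log (y (u / δ)) * Real.exp (-u)) :
    (∀ δ : ℝ, ν₁ < δ →
      m' δ ≤ (-b) / δ + (1 / δ ^ 2) * (2 * K / (1 - ν₁ / δ) ^ 3)) ∧
    ∃ δ₂ : ℝ, 0 < δ₂ ∧ ∀ δ : ℝ, δ₂ < δ → m' δ < 0 := by
  obtain ⟨hc₁0, hc₁1⟩ := hc₁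
  have hc₂0 : 0 < c₂ := by rw [hc₂]; linarith
  have hK1 : c₁ * ν₂ ^ 2 ≤ K / 2 := by
    rw [hK]; have := le_max_left (c₁ * ν₂ ^ 2) (c₂ * ν₁ ^ 2); linarith
  have hK2 : c₂ * ν₁ ^ 2 ≤ K / 2 := by
    rw [hK]; have := le_max_right (c₁ * ν₂ ^ 2) (c₂ * ν₁ ^ 2); linarith
  have hKpos : 0 < K := by
    have : (0:ℝ) < c₂ * ν₁ ^ 2 := by positivity
    linarith
  have hypos : ∀ t : ℝ, 0 < y t := by
    intro t; rw [hy]; positivity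
  have key : ∀ δ : ℝ, ν₁ < δ →
      m' δ ≤ (-b) / δ + (1 / δ ^ 2) * (2 * K / (1 - ν₁ / δ) ^ 3) := by
    intro δ hδ
    have hδ0 : 0 < δ := lt_trans hν₁pos hδ
    obtain ⟨r, hr⟩ : ∃ r : ℝ, r = ν₁ / δ := ⟨_, rfl⟩
    obtain ⟨s, hs⟩ : ∃ s : ℝ, s = ν₂ / δ := ⟨_, rfl⟩
    have hr0 : 0 < r := hr ▸ div_pos hν₁pos hδ0
    have hr1 : r < 1 := hr ▸ (div_lt_one hδ0).mpr hδ
    have hs0 : s < 0 := hs ▸ div_neg_of_neg_of_pos hν₂neg hδ0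
    -- pointwise identity for the upper-bound integrand
    have hintegrand : ∀ u : ℝ, (y (u / δ) - 1) * Real.exp (-u)
        = c₁ * Real.exp ((s - 1) * u) + c₂ * Real.exp ((r - 1) * u) - Real.exp (-u) := by
      intro u
      have e1 : Real.exp ((s - 1) * u) = Real.exp (ν₂ * (u / δ)) * Real.exp (-u) := by
        rw [← Real.exp_add]; congr 1; rw [hs]; ring
      have e2 : Real.exp ((r - 1) * u) = Real.exp (ν₁ * (u / δ)) * Real.exp (-u) := by
        rw [← Real.exp_add]; congr 1; rw [hr]; ring
      rw [hy, e1, e2]; ring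
    have hia : IntegrableOn (fun u => Real.exp ((s - 1) * u)) (Set.Ioi (0:ℝ)) :=
      aux_int s (by linarith)
    have hib : IntegrableOn (fun u => Real.exp ((r - 1) * u)) (Set.Ioi (0:ℝ)) :=
      aux_int r hr1
    have hic : IntegrableOn (fun u => Real.exp (-u)) (Set.Ioi (0:ℝ)) := by
      simpa using exp_neg_integrableOn_Ioi (0:ℝ) one_pos
    have hInt_ub : IntegrableOn (fun u => (y (u / δ) - 1) * Real.exp (-u)) (Set.Ioi (0:ℝ)) := by
      have heq : (fun u => (y (u / δ) - 1) * Real.exp (-u))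
          = fun u => c₁ * Real.exp ((s - 1) * u) + c₂ * Real.exp ((r - 1) * u) - Real.exp (-u) :=
        funext hintegrand
      rw [heq]
      exact ((hia.const_mul c₁).add (hib.const_mul c₂)).sub hic
    -- integrability of the log integrand
    have hmeas : Continuous fun u : ℝ => Real.log (y (u / δ)) * Real.exp (-u) := by
      have hyc : Continuous y := by rw [hy]; fun_prop
      have h1 : Continuous fun u : ℝ => y (u / δ) := hyc.comp (continuous_id.div_const δ)
      exact (h1.log fun u => (hypos _).ne').mul (Real.continuous_exp.comp continuous_neg)
    have hbound : ∀ u ∈ Set.Ioi (0:ℝ), ‖Real.log (y (u / δ)) * Real.exp (-u)‖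
        ≤ (|Real.log c₂| + c₁) * Real.exp (-u) + c₂ * Real.exp ((r - 1) * u) := by
      intro u hu
      have hu0 : (0:ℝ) ≤ u := le_of_lt hu
      have ht0 : (0:ℝ) ≤ u / δ := div_nonneg hu0 hδ0.le
      have he2 : Real.exp (ν₂ * (u / δ)) ≤ 1 := by
        rw [Real.exp_le_one_iff]
        exact mul_nonpos_of_nonpos_of_nonneg hν₂neg.le ht0
      have he1 : ν₁ * (u / δ) = r * u := by rw [hr]; ring
      have hyub : y (u / δ) - 1 ≤ c₁ + c₂ * Real.exp (r * u) - 1 := by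
        rw [hy]; simp only
        rw [he1]
        nlinarith [Real.exp_pos (r * u)]
      have hylb : Real.log c₂ ≤ Real.log (y (u / δ)) := by
        apply Real.log_le_log hc₂0
        rw [hy]; simp only
        rw [he1]
        nlinarith [Real.exp_pos (ν₂ * (u / δ)), Real.one_le_exp (by positivity : (0:ℝ) ≤ r * u)]
      have hlogub : Real.log (y (u / δ)) ≤ c₁ + c₂ * Real.exp (r * u) - 1 :=
        le_trans (Real.log_le_sub_one_of_pos (hypos _)) hyub
      have habs : |Real.log (y (u / δ))| ≤ |Real.log c₂| + c₁ + c₂ * Real.exp (r * u) := by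
        rw [abs_le]
        constructor
        · have h1 := neg_abs_le (Real.log c₂)
          have h2 : (0:ℝ) < c₂ * Real.exp (r * u) := by positivity
          linarith
        · have h1 := abs_nonneg (Real.log c₂)
          linarith
      rw [norm_mul, Real.norm_eq_abs, Real.norm_eq_abs, abs_of_pos (Real.exp_pos _)]
      calc |Real.log (y (u / δ))| * Real.exp (-u)
          ≤ (|Real.log c₂| + c₁ + c₂ * Real.exp (r * u)) * Real.exp (-u) :=
            mul_le_mul_of_nonneg_right habs (Real.exp_pos _).le
        _ = (|Real.log c₂| + c₁) * Real.exp (-u) + c₂ * Real.exp ((r - 1) * u) := by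
            rw [show (r - 1) * u = r * u + -u by ring, Real.exp_add]; ring
    have hInt_log : IntegrableOn (fun u => Real.log (y (u / δ)) * Real.exp (-u))
        (Set.Ioi (0:ℝ)) := by
      apply Integrable.mono' ((hic.const_mul (|Real.log c₂| + c₁)).add (hib.const_mul c₂))
        hmeas.aestronglyMeasurable.restrict
      exact (ae_restrict_iff' measurableSet_Ioi).mpr (Filter.Eventually.of_forall hbound)
    -- monotone step
    have step1 : m' δ ≤ ∫ u in Set.Ioi (0:ℝ), (y (u / δ) - 1) * Real.exp (-u) := by
      rw [hm']
      exact setIntegral_mono_on hInt_log hInt_ub measurableSet_Ioi fun u _ =>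
        mul_le_mul_of_nonneg_right (Real.log_le_sub_one_of_pos (hypos _)) (Real.exp_pos _).le
    -- evaluate the upper-bound integral
    have hI : ∫ u in Set.Ioi (0:ℝ), (y (u / δ) - 1) * Real.exp (-u)
        = c₁ * (1 / (1 - s)) + c₂ * (1 / (1 - r)) - 1 := by
      have heq : (fun u => (y (u / δ) - 1) * Real.exp (-u))
          = fun u => c₁ * Real.exp ((s - 1) * u) + c₂ * Real.exp ((r - 1) * u) - Real.exp (-u) :=
        funext hintegrand
      have hadd : Integrable
          (fun u => c₁ * Real.exp ((s - 1) * u) + c₂ * Real.exp ((r - 1) * u))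
          (volume.restrict (Set.Ioi 0)) := (hia.const_mul c₁).add (hib.const_mul c₂)
      rw [heq, integral_sub hadd hic,
        integral_add (hia.const_mul c₁) (hib.const_mul c₂),
        integral_const_mul, integral_const_mul, aux_val s (by linarith), aux_val r hr1,
        integral_exp_neg_Ioi_zero]
    -- algebraic estimate
    have h1s : (1:ℝ) < 1 - s := by linarith
    have h1r : (0:ℝ) < 1 - r := by linarith
    have hP3 : (0:ℝ) < (1 - r) ^ 3 := by positivity
    have hP3le1 : (1 - r) ^ 3 ≤ 1 := pow_le_one₀ (by linarith) (by linarith)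
    have hT1 : c₁ * ν₂ ^ 2 / (1 - s) ≤ K / (1 - r) ^ 3 := by
      have a1 : c₁ * ν₂ ^ 2 / (1 - s) ≤ c₁ * ν₂ ^ 2 :=
        div_le_self (by positivity) (by linarith)
      have a2 : K ≤ K / (1 - r) ^ 3 := le_div_self hKpos.le hP3 hP3le1
      linarith
    have hT2 : c₂ * ν₁ ^ 2 / (1 - r) ≤ K / (1 - r) ^ 3 := by
      have hP3leP : (1 - r) ^ 3 ≤ 1 - r := by
        calc (1 - r) ^ 3 = (1 - r) * (1 - r) ^ 2 := by ring
          _ ≤ (1 - r) * 1 :=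
            mul_le_mul_of_nonneg_left (pow_le_one₀ (by linarith) (by linarith)) (by linarith)
          _ = 1 - r := mul_one _
      have a1 : c₂ * ν₁ ^ 2 / (1 - r) ≤ (K / 2) / (1 - r) := (div_le_div_iff_of_pos_right h1r).mpr hK2
      have a2 : (K / 2) / (1 - r) ≤ (K / 2) / (1 - r) ^ 3 := by
        apply div_le_div_of_nonneg_left (by linarith) hP3 hP3leP
      have a3 : (K / 2) / (1 - r) ^ 3 ≤ K / (1 - r) ^ 3 :=
        (div_le_div_iff_of_pos_right hP3).mpr (by linarith)
      linarith
    have hident : c₁ * (1 / (1 - s)) + c₂ * (1 / (1 - r)) - 1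
        = (c₁ * ν₂ + c₂ * ν₁) / δ
          + (c₁ * ν₂ ^ 2 / (1 - s) + c₂ * ν₁ ^ 2 / (1 - r)) / δ ^ 2 := by
      have hδne : δ ≠ 0 := hδ0.ne'
      have hd2 : δ - ν₂ ≠ 0 := by have : ν₂ < δ := lt_trans hν₂neg hδ0; linarith
      have hd1 : δ - ν₁ ≠ 0 := by linarith
      rw [hr, hs, hc₂]
      have e1 : (1:ℝ) - ν₂ / δ = (δ - ν₂) / δ := by field_simp
      have e2 : (1:ℝ) - ν₁ / δ = (δ - ν₁) / δ := by field_simp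
      rw [e1, e2]
      field_simp
      ring
    have hfinal : c₁ * (1 / (1 - s)) + c₂ * (1 / (1 - r)) - 1
        ≤ (-b) / δ + (1 / δ ^ 2) * (2 * K / (1 - r) ^ 3) := by
      rw [hident, hderiv0]
      have h2K : 2 * K / (1 - r) ^ 3 = K / (1 - r) ^ 3 + K / (1 - r) ^ 3 := by ring
      have hnum : c₁ * ν₂ ^ 2 / (1 - s) + c₂ * ν₁ ^ 2 / (1 - r) ≤ 2 * K / (1 - r) ^ 3 :=
        by linarith only [hT1, hT2, h2K]
      have hδ2 : (0:ℝ) < δ ^ 2 := by positivity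
      have h2 := (div_le_div_iff_of_pos_right hδ2).mpr hnum
      have h3 : (1 / δ ^ 2) * (2 * K / (1 - r) ^ 3) = (2 * K / (1 - r) ^ 3) / δ ^ 2 := by ring
      linarith only [h2, h3]
    calc m' δ ≤ ∫ u in Set.Ioi (0:ℝ), (y (u / δ) - 1) * Real.exp (-u) := step1
      _ = c₁ * (1 / (1 - s)) + c₂ * (1 / (1 - r)) - 1 := hI
      _ ≤ (-b) / δ + (1 / δ ^ 2) * (2 * K / (1 - r) ^ 3) := hfinal
      _ = (-b) / δ + (1 / δ ^ 2) * (2 * K / (1 - ν₁ / δ) ^ 3) := by rw [hr]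
  refine ⟨key, max (2 * ν₁) (16 * K / b) + 1, by positivity, ?_⟩
  intro δ hδ
  have hδν : ν₁ < δ := by
    have := le_max_left (2 * ν₁) (16 * K / b)
    linarith
  have hδ0 : 0 < δ := lt_trans hν₁pos hδν
  have hrhalf : ν₁ / δ ≤ 1 / 2 := by
    rw [div_le_div_iff₀ hδ0 two_pos]
    have := le_max_left (2 * ν₁) (16 * K / b)
    linarith
  have hP : (1:ℝ) / 8 ≤ (1 - ν₁ / δ) ^ 3 := by
    have h : (1:ℝ) / 2 ≤ 1 - ν₁ / δ := by linarith
    calc (1:ℝ) / 8 = (1 / 2 : ℝ) ^ 3 := by norm_num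
      _ ≤ (1 - ν₁ / δ) ^ 3 := pow_le_pow_left₀ (by norm_num) h 3
  have hbig : 16 * K < b * δ := by
    have h1 : 16 * K / b < δ := by
      have := le_max_right (2 * ν₁) (16 * K / b)
      linarith
    calc 16 * K = b * (16 * K / b) := by field_simp
      _ < b * δ := by exact (mul_lt_mul_iff_right₀ hb).mpr h1
  have hbound2 : 2 * K / (1 - ν₁ / δ) ^ 3 ≤ 16 * K := by
    rw [div_le_iff₀ (by linarith : (0:ℝ) < (1 - ν₁ / δ) ^ 3)]
    have := mul_le_mul_of_nonneg_left hP (show (0:ℝ) ≤ 16 * K by linarith)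
    linarith
  have hlast : (-b) / δ + (1 / δ ^ 2) * (2 * K / (1 - ν₁ / δ) ^ 3) < 0 := by
    have h1 : (1 / δ ^ 2) * (2 * K / (1 - ν₁ / δ) ^ 3) ≤ (1 / δ ^ 2) * (16 * K) :=
      mul_le_mul_of_nonneg_left hbound2 (by positivity)
    have h2 : (-b) / δ + (1 / δ ^ 2) * (16 * K) < 0 := by
      have he : (-b) / δ + (1 / δ ^ 2) * (16 * K) = (16 * K - b * δ) / δ ^ 2 := by
        field_simp; ring
      rw [he]
      apply div_neg_of_neg_of_pos (by linarith) (by positivity)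
    linarith
  exact lt_of_le_of_lt (key δ hδν) hlast
end
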